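/- Let q be a prime power and let ℓ be a line in P^n(F_{q²}) and U_n the non-degenerate Hermitian variety in P^n. Then the number of F_{q²}-rational points of ℓ ∩ U_n is either 1, q+1, or q²+1 (the last case meaning ℓ ⊆ U_n). -/

import Mathlib

open Polynomial

section helpers
variable {K : Type} [Field K] [Fintype K]

variable {K : Type} [Field K] [Fintype K]

private lemma ncard_le_deg' (p : Polynomial K) (hp : p ≠ 0) (Q : K → Prop)
    (h : ∀ x, Q x → p.IsRoot x) : Nat.card {x : K // Q x} ≤ p.natDegree := by
  classical
  rw [Nat.card_eq_fintype_card, Fintype.card_subtype]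
  have h2 : (Finset.univ.filter Q) ⊆ p.roots.toFinset := by
    intro x hx
    rw [Finset.mem_filter] at hx
    rw [Multiset.mem_toFinset, mem_roots hp]
    exact h x hx.2
  exact le_trans (Finset.card_le_card h2) (le_trans p.roots.toFinset_card_le p.card_roots')

private def optEquiv1 {α : Type} (P : Prop) (Q : α → Prop) (hP : ¬ P) :
    {o : Option α // o.elim P Q} ≃ {a : α // Q a} where
  toFun o := match o with
    | ⟨none, h⟩ => absurd h hP
    | ⟨some a, h⟩ => ⟨a, h⟩
  invFun a := ⟨some a.1, a.2⟩
  left_inv o := match o with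
    | ⟨none, h⟩ => absurd h hP
    | ⟨some _, _⟩ => rfl
  right_inv a := rfl

private def optEquiv2 {α : Type} (P : Prop) (Q : α → Prop) (hP : P) :
    {o : Option α // o.elim P Q} ≃ Option {a : α // Q a} where
  toFun o := match o with
    | ⟨none, _⟩ => none
    | ⟨some a, h⟩ => some ⟨a, h⟩
  invFun o := match o with
    | none => ⟨none, hP⟩
    | some a => ⟨some a.1, a.2⟩
  left_inv o := match o with
    | ⟨none, _⟩ => rfl
    | ⟨some _, _⟩ => rfl
  right_inv o := match o with
    | none => rfl
    | some _ => rfl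


private lemma trace_count {q : ℕ} (hq2 : 2 ≤ q) (hcard : Fintype.card K = q ^ 2)
    (hfrob : ∀ x y : K, (x + y) ^ q = x ^ q + y ^ q)
    (a : K) (ha : a ^ q = a) :
    Nat.card {s : K // s + s ^ q + a = 0} = q := by
  classical
  have hq0 : 0 < q := by omega
  have hpow2 : ∀ x : K, (x ^ q) ^ q = x := by
    intro x
    rw [← pow_mul, show q * q = Fintype.card K by rw [hcard]; ring]
    exact FiniteField.pow_card x
  set T : K →+ K :=
    { toFun := fun s => s + s ^ q,
      map_zero' := by simp [zero_pow hq0.ne'],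
      map_add' := fun x y => by
        show (x + y) + (x + y) ^ q = (x + x ^ q) + (y + y ^ q)
        rw [hfrob]; ring } with hT
  have hTapp : ∀ s : K, T s = s + s ^ q := fun s => rfl
  -- kernel bound
  have hXqX : (X ^ q + X : K[X]).Monic := by
    apply monic_X_pow_add
    rw [degree_X]
    exact_mod_cast hq2
  have hdeg1 : (X ^ q + X : K[X]).natDegree ≤ q :=
    le_trans (natDegree_add_le _ _) (by simp [natDegree_X_pow]; omega)
  have hker_le : Nat.card T.ker ≤ q := by
    refine le_trans (ncard_le_deg' (X ^ q + X) hXqX.ne_zero (fun s => s ∈ T.ker) ?_) hdeg1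
    intro x hx
    rw [AddMonoidHom.mem_ker, hTapp] at hx
    simp [IsRoot, eval_add, eval_pow, eval_X]
    linear_combination hx
  -- range bound
  have hXqX' : (X ^ q - X : K[X]).Monic := by
    apply monic_X_pow_sub
    rw [degree_X]
    exact_mod_cast hq2
  have hdeg2 : (X ^ q - X : K[X]).natDegree ≤ q :=
    le_trans (natDegree_sub_le _ _) (by simp [natDegree_X_pow]; omega)
  have hrange_sub : ∀ y : K, y ∈ T.range → y ^ q = y := by
    rintro y ⟨s, rfl⟩
    rw [hTapp, hfrob, hpow2, add_comm]
  have hroot : ∀ y : K, y ^ q = y → (X ^ q - X : K[X]).IsRoot y := by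
    intro y hy
    simp [IsRoot, eval_sub, eval_pow, eval_X, hy]
  have hrange_le : Nat.card T.range ≤ q := by
    refine le_trans (ncard_le_deg' (X ^ q - X) hXqX'.ne_zero (fun s => s ∈ T.range) ?_) hdeg2
    exact fun y hy => hroot y (hrange_sub y hy)
  -- first isomorphism
  have hiso : Nat.card (K ⧸ T.ker) = Nat.card T.range :=
    Nat.card_congr (QuotientAddGroup.quotientKerEquivRange T).toEquiv
  have hprod : Nat.card K = Nat.card (K ⧸ T.ker) * Nat.card T.ker :=
    AddSubgroup.card_eq_card_quotient_mul_card_addSubgroup T.ker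
  rw [hiso] at hprod
  have hcardK : Nat.card K = q * q := by
    rw [Nat.card_eq_fintype_card, hcard]; ring
  have hkq : Nat.card T.ker = q ∧ Nat.card T.range = q := by
    constructor
    · have h1 : q * q ≤ q * Nat.card T.ker := by
        calc q * q = Nat.card T.range * Nat.card T.ker := by rw [← hprod, hcardK]
        _ ≤ q * Nat.card T.ker := Nat.mul_le_mul_right _ hrange_le
      exact le_antisymm hker_le (Nat.le_of_mul_le_mul_left h1 hq0)
    · have h1 : q * q ≤ Nat.card T.range * q := by
        calc q * q = Nat.card T.range * Nat.card T.ker := by rw [← hprod, hcardK]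
        _ ≤ Nat.card T.range * q := Nat.mul_le_mul_left _ hker_le
      exact le_antisymm hrange_le (Nat.le_of_mul_le_mul_right h1 hq0)
  -- range is the whole fixed set
  have hfix : (T.range : Set K) = {y : K | y ^ q = y} := by
    apply Set.eq_of_subset_of_ncard_le
    · exact fun y hy => hrange_sub y hy
    · have h2 : ({y : K | y ^ q = y} : Set K).ncard ≤ q := by
        rw [← Nat.card_coe_set_eq]
        exact le_trans (ncard_le_deg' (X ^ q - X) hXqX'.ne_zero _ (fun y hy => hroot y hy)) hdeg2
      have h3 : ((T.range : Set K)).ncard = Nat.card T.range := by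
        rw [← Nat.card_coe_set_eq]; rfl
      rw [h3, hkq.2]
      exact h2
    · exact Set.toFinite _
  have hneg : (-a) ^ q = -a := by
    have h0 : (0 : K) ^ q = 0 := zero_pow hq0.ne'
    have := hfrob a (-a)
    rw [add_neg_cancel, h0, ha] at this
    linear_combination -this
  have hmem : -a ∈ T.range := by
    have : (-a) ∈ ({y : K | y ^ q = y} : Set K) := hneg
    rwa [← hfix] at this
  obtain ⟨s0, hs0⟩ := hmem
  -- fiber equiv kernel
  have hequiv : {s : K // s + s ^ q + a = 0} ≃ T.ker :=
    { toFun := fun s => ⟨s.1 - s0, by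
        rw [AddMonoidHom.mem_ker, map_sub, hs0, hTapp, sub_neg_eq_add]
        exact s.2⟩
      invFun := fun u => ⟨u.1 + s0, by
        have hu : T u.1 = 0 := u.2
        rw [hTapp] at hu
        have h4 : T (u.1 + s0) = T u.1 + -a := by rw [map_add, hs0]
        rw [hTapp, hTapp] at h4
        linear_combination h4 + hu⟩
      left_inv := fun s => Subtype.ext (by simp)
      right_inv := fun u => Subtype.ext (by simp) }
  rw [Nat.card_congr hequiv]
  exact hkq.1


private lemma units_count_le (m : ℕ) (hm : m ≠ 0) :
    Nat.card {u : Kˣ // u ^ m = 1} ≤ m := by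
  classical
  have hinj : Function.Injective (fun u : {u : Kˣ // u ^ m = 1} =>
      (⟨(u.1 : K), by
        have := congrArg (Units.val) u.2
        rwa [Units.val_pow_eq_pow_val, Units.val_one] at this⟩ :
        {x : K // x ^ m = 1})) := by
    intro u v huv
    have := congrArg Subtype.val huv
    exact Subtype.ext (Units.ext this)
  refine le_trans (Nat.card_le_card_of_injective _ hinj) ?_
  refine le_trans (ncard_le_deg' (X ^ m - C 1) (monic_X_pow_sub_C 1 hm).ne_zero _ ?_) ?_
  · intro x hx
    simp [IsRoot, eval_sub, eval_pow, eval_X, eval_C, hx]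
  · rw [natDegree_X_pow_sub_C]

private lemma norm_count {q : ℕ} (hq2 : 2 ≤ q) (hcard : Fintype.card K = q ^ 2)
    (d : K) (hd0 : d ≠ 0) (hd : d ^ q = d) :
    Nat.card {s : K // s ^ (q + 1) = d} = q + 1 := by
  classical
  have hq0 : 0 < q := by omega
  have hcardU : Fintype.card Kˣ = q ^ 2 - 1 := by
    rw [Fintype.card_units, hcard]
  have hmul : (q + 1) * (q - 1) = q ^ 2 - 1 := by
    obtain ⟨m, rfl⟩ : ∃ m, q = m + 2 := ⟨q - 2, by omega⟩
    have : (m + 2) ^ 2 = m * m + 4 * m + 4 := by ring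
    rw [this]
    have : (m + 2 + 1) * (m + 2 - 1) = m * m + 4 * m + 3 := by
      have h1 : m + 2 - 1 = m + 1 := by omega
      rw [h1]; ring
    omega
  have hupow : ∀ u : Kˣ, u ^ (q ^ 2 - 1) = 1 := by
    intro u
    rw [← hcardU]
    exact pow_card_eq_one
  set φ : Kˣ →* Kˣ := powMonoidHom (q + 1) with hφ
  have hφapp : ∀ u : Kˣ, φ u = u ^ (q + 1) := fun u => rfl
  -- kernel bound
  have hker_eq : Nat.card φ.ker = Nat.card {u : Kˣ // u ^ (q + 1) = 1} :=
    Nat.card_congr (Equiv.subtypeEquivRight (fun u => by rw [MonoidHom.mem_ker, hφapp]))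
  have hker_le : Nat.card φ.ker ≤ q + 1 := by
    rw [hker_eq]; exact units_count_le (q + 1) (by omega)
  -- range bound
  have hrange_sub : ∀ u : Kˣ, u ∈ φ.range → u ^ (q - 1) = 1 := by
    rintro u ⟨s, rfl⟩
    rw [hφapp, ← pow_mul, hmul]
    exact hupow s
  have hrange_eq' : Nat.card φ.range ≤ Nat.card {u : Kˣ // u ^ (q - 1) = 1} := by
    refine Nat.card_le_card_of_injective
      (fun u => (⟨u.1, hrange_sub u.1 u.2⟩ : {u : Kˣ // u ^ (q - 1) = 1})) ?_
    intro u v huv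
    exact Subtype.ext (congrArg (fun w : {u : Kˣ // u ^ (q - 1) = 1} => w.1) huv)
  have hrange_le : Nat.card φ.range ≤ q - 1 :=
    le_trans hrange_eq' (units_count_le (q - 1) (by omega))
  -- first isomorphism
  have hiso : Nat.card (Kˣ ⧸ φ.ker) = Nat.card φ.range :=
    Nat.card_congr (QuotientGroup.quotientKerEquivRange φ).toEquiv
  have hprod : Nat.card Kˣ = Nat.card (Kˣ ⧸ φ.ker) * Nat.card φ.ker :=
    Subgroup.card_eq_card_quotient_mul_card_subgroup φ.ker
  rw [hiso] at hprod
  have hcardU' : Nat.card Kˣ = (q - 1) * (q + 1) := by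
    rw [Nat.card_eq_fintype_card, hcardU, ← hmul]; ring
  have hq10 : 0 < q - 1 := by omega
  have hkq : Nat.card φ.ker = q + 1 ∧ Nat.card φ.range = q - 1 := by
    constructor
    · have h1 : (q - 1) * (q + 1) ≤ (q - 1) * Nat.card φ.ker := by
        calc (q - 1) * (q + 1) = Nat.card φ.range * Nat.card φ.ker := by rw [← hprod, hcardU']
        _ ≤ (q - 1) * Nat.card φ.ker := Nat.mul_le_mul_right _ hrange_le
      exact le_antisymm hker_le (Nat.le_of_mul_le_mul_left h1 hq10)
    · have h1 : Nat.card φ.range * (q + 1) ≤ Nat.card φ.range * Nat.card φ.ker := by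
        rw [← hprod, hcardU']
        exact Nat.mul_le_mul hrange_le le_rfl
      have h2 := Nat.le_of_mul_le_mul_right (by
        calc (q - 1) * (q + 1) = Nat.card φ.range * Nat.card φ.ker := by rw [← hprod, hcardU']
        _ ≤ Nat.card φ.range * (q + 1) := Nat.mul_le_mul_left _ hker_le) (by omega : 0 < q + 1)
      exact le_antisymm hrange_le h2
  -- d as a unit lies in range
  set du : Kˣ := Units.mk0 d hd0 with hdu
  have hduval : (du : K) = d := rfl
  have hdufix : du ^ (q - 1) = 1 := by
    apply Units.ext
    rw [Units.val_pow_eq_pow_val, Units.val_one, hduval]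
    have h5 : d ^ (q - 1) * d = 1 * d := by
      rw [← pow_succ]
      have : q - 1 + 1 = q := by omega
      rw [this, hd, one_mul]
    exact mul_right_cancel₀ hd0 h5
  have hfix : (φ.range : Set Kˣ) = {u : Kˣ | u ^ (q - 1) = 1} := by
    apply Set.eq_of_subset_of_ncard_le
    · exact fun u hu => hrange_sub u hu
    · have h2 : ({u : Kˣ | u ^ (q - 1) = 1} : Set Kˣ).ncard ≤ q - 1 := by
        rw [← Nat.card_coe_set_eq]
        exact units_count_le (q - 1) (by omega)
      have h3 : ((φ.range : Set Kˣ)).ncard = Nat.card φ.range := by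
        rw [← Nat.card_coe_set_eq]; rfl
      rw [h3, hkq.2]
      exact h2
    · exact Set.toFinite _
  have hmem : du ∈ φ.range := by
    have : du ∈ ({u : Kˣ | u ^ (q - 1) = 1} : Set Kˣ) := hdufix
    rwa [← hfix] at this
  obtain ⟨s0, hs0⟩ := hmem
  rw [hφapp] at hs0
  -- fiber equivalences
  have he1 : {s : K // s ^ (q + 1) = d} ≃ {u : Kˣ // u ^ (q + 1) = du} :=
    { toFun := fun s => ⟨Units.mk0 s.1 (by
        intro h0
        apply hd0
        rw [← s.2, h0, zero_pow (by omega : q + 1 ≠ 0)]), by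
        apply Units.ext
        rw [Units.val_pow_eq_pow_val]
        exact s.2⟩
      invFun := fun u => ⟨(u.1 : K), by
        have := congrArg Units.val u.2
        rwa [Units.val_pow_eq_pow_val, hduval] at this⟩
      left_inv := fun s => Subtype.ext rfl
      right_inv := fun u => Subtype.ext (Units.ext rfl) }
  have he2 : {u : Kˣ // u ^ (q + 1) = du} ≃ {u : Kˣ // u ^ (q + 1) = 1} :=
    Equiv.subtypeEquiv (Equiv.mulRight s0⁻¹) (by
      intro u
      rw [Equiv.coe_mulRight, mul_pow, inv_pow, hs0, mul_inv_eq_one])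
  calc Nat.card {s : K // s ^ (q + 1) = d}
      = Nat.card {u : Kˣ // u ^ (q + 1) = 1} := Nat.card_congr (he1.trans he2)
    _ = q + 1 := by rw [← hker_eq]; exact hkq.1

end helpers

set_option maxHeartbeats 1000000 in
/-- A line `ℓ` in `ℙ^n(F_{q²})` meets the non-degenerate Hermitian variety `U_n`
in either `1`, `q+1`, or `q²+1` rational points, the last case occurring exactly
when `ℓ ⊆ U_n`. -/
theorem stmt3 (q n : ℕ) (hq : IsPrimePow q) (hn : 1 ≤ n)
    (K : Type) [Field K] [Fintype K] (hK : Fintype.card K = q ^ 2)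
    (W : Submodule K (Fin (n + 1) → K)) (hW : Module.finrank K W = 2) :
    Nat.card {x : Projectivization K (Fin (n + 1) → K) //
        x.submodule ≤ W ∧ ∑ i : Fin (n + 1), x.rep i ^ (q + 1) = 0}
      ∈ ({1, q + 1, q ^ 2 + 1} : Set ℕ) ∧
    (Nat.card {x : Projectivization K (Fin (n + 1) → K) //
        x.submodule ≤ W ∧ ∑ i : Fin (n + 1), x.rep i ^ (q + 1) = 0} = q ^ 2 + 1 ↔
      ∀ x : Projectivization K (Fin (n + 1) → K),
        x.submodule ≤ W → ∑ i : Fin (n + 1), x.rep i ^ (q + 1) = 0) := by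
  classical
  have hq2 : 2 ≤ q := hq.two_le
  obtain ⟨p, k, hpp, hk, hpk⟩ := hq
  have hp : p.Prime := Nat.prime_iff.mpr hpp
  haveI hRC : CharP K (ringChar K) := ringChar.charP K
  obtain ⟨m, hrprime, hcardm⟩ := FiniteField.card K (ringChar K)
  have hpr : p = ringChar K := by
    have h1 : p ∣ (ringChar K) ^ (m : ℕ) := by
      rw [← hcardm, hK, ← hpk, ← pow_mul]
      exact dvd_pow_self p (by positivity)
    exact (Nat.prime_dvd_prime_iff_eq hp hrprime).mp (hp.dvd_of_dvd_pow h1)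
  haveI : CharP K p := by rw [hpr]; exact hRC
  haveI : Fact p.Prime := ⟨hp⟩
  have hF : ∀ x : K, (iterateFrobenius K p k) x = x ^ q := fun x => by
    rw [iterateFrobenius_def, hpk]
  have hfrob : ∀ x y : K, (x + y) ^ q = x ^ q + y ^ q := fun x y => by
    rw [← hF, ← hF, ← hF, map_add]
  have hq0 : 0 < q := by omega
  have hpow2 : ∀ x : K, (x ^ q) ^ q = x := by
    intro x
    rw [← pow_mul, show q * q = Fintype.card K by rw [hK]; ring]
    exact FiniteField.pow_card x
  have hfixpow : ∀ x : K, (x ^ (q + 1)) ^ q = x ^ (q + 1) := by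
    intro x
    rw [pow_succ, mul_pow, hpow2, mul_comm]
  -- homogeneity
  have hH : ∀ (r : K) (v : Fin (n + 1) → K),
      ∑ i, (r • v) i ^ (q + 1) = r ^ (q + 1) * ∑ i, v i ^ (q + 1) := by
    intro r v
    simp only [Pi.smul_apply, smul_eq_mul, mul_pow, Finset.mul_sum]
  have hHmk : ∀ (v : Fin (n + 1) → K) (hv : v ≠ 0),
      ((∑ i, (Projectivization.mk K v hv).rep i ^ (q + 1)) = 0 ↔ (∑ i, v i ^ (q + 1)) = 0) := by
    intro v hv
    obtain ⟨u, hu⟩ := Projectivization.exists_smul_eq_mk_rep K v hv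
    rw [← hu, Units.smul_def, hH, mul_eq_zero]
    have hune : ((u : K)) ^ (q + 1) ≠ 0 := pow_ne_zero _ u.ne_zero
    tauto
  -- basis of the line
  set b := Module.finBasisOfFinrankEq K W hW with hbdef
  set e : Fin (n + 1) → K := ((b 0 : W) : Fin (n + 1) → K) with hedef
  set f : Fin (n + 1) → K := ((b 1 : W) : Fin (n + 1) → K) with hfdef
  have heW : e ∈ W := (b 0).2
  have hfW : f ∈ W := (b 1).2
  have hind : ∀ s t : K, s • e + t • f = 0 → s = 0 ∧ t = 0 := by
    intro s t h
    have h0 : s • (b 0) + t • (b 1) = (0 : W) := Subtype.ext (by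
      show s • e + t • f = 0
      exact h)
    have hli := b.linearIndependent
    rw [Fintype.linearIndependent_iff] at hli
    have h2 := hli ![s, t] (by
      rw [Fin.sum_univ_two]
      simp only [Matrix.cons_val_zero, Matrix.cons_val_one, Matrix.head_cons]
      exact h0)
    exact ⟨h2 0, h2 1⟩
  have he0 : e ≠ 0 := by
    intro h
    have h2 := hind 1 0 (by rw [one_smul, zero_smul, add_zero]; exact h)
    exact one_ne_zero h2.1
  have hvt : ∀ t : K, t • e + f ≠ 0 := by
    intro t h
    have h2 := hind t 1 (by rw [one_smul]; exact h)
    exact one_ne_zero h2.2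
  have hmemvt : ∀ t : K, t • e + f ∈ W := fun t => W.add_mem (W.smul_mem _ heW) hfW
  have hdecomp : ∀ w, w ∈ W → ∃ s t : K, w = s • e + t • f := by
    intro w hw
    refine ⟨b.repr ⟨w, hw⟩ 0, b.repr ⟨w, hw⟩ 1, ?_⟩
    have h1 := b.sum_repr ⟨w, hw⟩
    rw [Fin.sum_univ_two] at h1
    have h2 := congrArg (Subtype.val) h1
    exact h2.symm
  -- constants
  set c := ∑ i, e i ^ (q + 1) with hc
  set aa := ∑ i, f i ^ (q + 1) with haa
  set bb := ∑ i, e i * f i ^ q with hbb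
  have hbbq : bb ^ q = ∑ i, e i ^ q * f i := by
    rw [← hF bb, hbb, map_sum]
    refine Finset.sum_congr rfl fun i _ => ?_
    rw [map_mul, hF, hF, hpow2]
  have hcq : c ^ q = c := by
    rw [hc, ← hF, map_sum]
    refine Finset.sum_congr rfl fun i _ => ?_
    rw [hF, hfixpow]
  have haq : aa ^ q = aa := by
    rw [haa, ← hF, map_sum]
    refine Finset.sum_congr rfl fun i _ => ?_
    rw [hF, hfixpow]
  -- expansion along the line
  have hexp : ∀ t : K, (∑ i, (t • e + f) i ^ (q + 1))
      = c * t ^ (q + 1) + bb * t + bb ^ q * t ^ q + aa := by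
    intro t
    have hpt : ∀ i, (t * e i + f i) ^ (q + 1)
        = e i ^ (q + 1) * t ^ (q + 1) + (e i * f i ^ q) * t + (e i ^ q * f i) * t ^ q
          + f i ^ (q + 1) := by
      intro i
      rw [pow_succ (t * e i + f i), hfrob, mul_pow]
      ring
    calc (∑ i, (t • e + f) i ^ (q + 1)) = ∑ i, (t * e i + f i) ^ (q + 1) := by
          refine Finset.sum_congr rfl fun i _ => ?_
          rw [Pi.add_apply, Pi.smul_apply, smul_eq_mul]
      _ = ∑ i, (e i ^ (q + 1) * t ^ (q + 1) + (e i * f i ^ q) * t + (e i ^ q * f i) * t ^ q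
          + f i ^ (q + 1)) := Finset.sum_congr rfl fun i _ => hpt i
      _ = (∑ i, e i ^ (q + 1)) * t ^ (q + 1) + (∑ i, e i * f i ^ q) * t
          + (∑ i, e i ^ q * f i) * t ^ q + (∑ i, f i ^ (q + 1)) := by
          simp [Finset.sum_add_distrib, Finset.sum_mul]
      _ = c * t ^ (q + 1) + bb * t + bb ^ q * t ^ q + aa := by rw [hbbq]
  -- parametrization of the projective line
  set X : Option K → Prop :=
    fun o => o.elim (c = 0) (fun t => (∑ i, (t • e + f) i ^ (q + 1)) = 0) with hX
  set Phi : Option K → Projectivization K (Fin (n + 1) → K) :=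
    fun o => o.elim (Projectivization.mk K e he0)
      (fun t => Projectivization.mk K (t • e + f) (hvt t)) with hPhi
  have hPhiN : Phi none = Projectivization.mk K e he0 := rfl
  have hPhiS : ∀ t, Phi (some t) = Projectivization.mk K (t • e + f) (hvt t) := fun t => rfl
  have hXN : X none ↔ c = 0 := Iff.rfl
  have hXS : ∀ t, (X (some t) ↔ (∑ i, (t • e + f) i ^ (q + 1)) = 0) := fun t => Iff.rfl
  have hPhiW : ∀ o, (Phi o).submodule ≤ W := by
    intro o
    cases o with
    | none =>
        rw [hPhiN, Projectivization.submodule_mk]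
        exact (Submodule.span_singleton_le_iff_mem _ _).mpr heW
    | some t =>
        rw [hPhiS, Projectivization.submodule_mk]
        exact (Submodule.span_singleton_le_iff_mem _ _).mpr (hmemvt t)
  have hPhiIff : ∀ o, ((∑ i, (Phi o).rep i ^ (q + 1)) = 0 ↔ X o) := by
    intro o
    cases o with
    | none => rw [hPhiN]; exact hHmk e he0
    | some t => rw [hPhiS]; exact hHmk _ (hvt t)
  have hPhiInj : Function.Injective Phi := by
    intro o1 o2 h
    match o1, o2 with
    | none, none => rfl
    | none, some t =>
        rw [hPhiN, hPhiS, Projectivization.mk_eq_mk_iff] at h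
        obtain ⟨u, hu⟩ := h
        rw [Units.smul_def] at hu
        have h0 : ((u : K) * t - 1) • e + (u : K) • f = (u : K) • (t • e + f) - e := by
          module
        rw [hu, sub_self] at h0
        exact absurd (hind _ _ h0).2 u.ne_zero
    | some t, none =>
        rw [hPhiN, hPhiS, Projectivization.mk_eq_mk_iff] at h
        obtain ⟨u, hu⟩ := h
        rw [Units.smul_def] at hu
        have h0 : ((u : K) - t) • e + (-1 : K) • f = (u : K) • e - (t • e + f) := by
          module
        rw [hu, sub_self] at h0
        exact absurd (neg_eq_zero.mp (hind _ _ h0).2) one_ne_zero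
    | some t1, some t2 =>
        rw [hPhiS, hPhiS, Projectivization.mk_eq_mk_iff] at h
        obtain ⟨u, hu⟩ := h
        rw [Units.smul_def] at hu
        have h0 : ((u : K) * t2 - t1) • e + ((u : K) - 1) • f
            = (u : K) • (t2 • e + f) - (t1 • e + f) := by module
        rw [hu, sub_self] at h0
        obtain ⟨h1, h2⟩ := hind _ _ h0
        have hu1 : (u : K) = 1 := by linear_combination h2
        have ht12 : t1 = t2 := by linear_combination -h1 + t2 * hu1
        rw [ht12]
  have hPhiSurj : ∀ x : Projectivization K (Fin (n + 1) → K),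
      x.submodule ≤ W → ∃ o, Phi o = x := by
    intro x hxW
    have hrep : x.rep ∈ W := by
      rwa [Projectivization.submodule_eq, Submodule.span_singleton_le_iff_mem] at hxW
    obtain ⟨s, t, hst⟩ := hdecomp _ hrep
    by_cases ht : t = 0
    · subst ht
      rw [zero_smul, add_zero] at hst
      have hs : s ≠ 0 := fun h0 => x.rep_nonzero (by rw [hst, h0, zero_smul])
      refine ⟨none, ?_⟩
      rw [hPhiN]
      conv_rhs => rw [← x.mk_rep]
      rw [Projectivization.mk_eq_mk_iff]
      refine ⟨(Units.mk0 s hs)⁻¹, ?_⟩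
      rw [Units.smul_def, hst]
      simp only [Units.val_inv_eq_inv_val, Units.val_mk0]
      rw [smul_smul, inv_mul_cancel₀ hs, one_smul]
    · refine ⟨some (s * t⁻¹), ?_⟩
      rw [hPhiS]
      conv_rhs => rw [← x.mk_rep]
      rw [Projectivization.mk_eq_mk_iff]
      refine ⟨(Units.mk0 t ht)⁻¹, ?_⟩
      rw [Units.smul_def]
      simp only [Units.val_inv_eq_inv_val, Units.val_mk0]
      rw [hst, smul_add, smul_smul, smul_smul, inv_mul_cancel₀ ht, one_smul, mul_comm t⁻¹ s]
  -- the equivalence with the statement's subtype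
  have hNcard : Nat.card {x : Projectivization K (Fin (n + 1) → K) //
        x.submodule ≤ W ∧ ∑ i : Fin (n + 1), x.rep i ^ (q + 1) = 0}
      = Nat.card {o : Option K // X o} := by
    refine (Nat.card_congr (Equiv.ofBijective
      (fun o : {o : Option K // X o} =>
        (⟨Phi o.1, hPhiW o.1, (hPhiIff o.1).mpr o.2⟩ :
          {x : Projectivization K (Fin (n + 1) → K) //
            x.submodule ≤ W ∧ ∑ i : Fin (n + 1), x.rep i ^ (q + 1) = 0})) ⟨?_, ?_⟩)).symm
    · intro o1 o2 h
      exact Subtype.ext (hPhiInj (congrArg Subtype.val h))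
    · rintro ⟨x, hxW, hx0⟩
      obtain ⟨o, ho⟩ := hPhiSurj x hxW
      exact ⟨⟨o, (hPhiIff o).mp (by rw [ho]; exact hx0)⟩, Subtype.ext ho⟩
  -- characterization of full containment
  have hall : (∀ x : Projectivization K (Fin (n + 1) → K),
      x.submodule ≤ W → ∑ i : Fin (n + 1), x.rep i ^ (q + 1) = 0) ↔
      (c = 0 ∧ bb = 0 ∧ aa = 0) := by
    constructor
    · intro hx
      have hc0 : c = 0 := by
        have h1 := hx (Projectivization.mk K e he0) (hPhiW none)
        rw [hc]
        exact (hHmk e he0).mp h1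
      have hgt : ∀ t : K, c * t ^ (q + 1) + bb * t + bb ^ q * t ^ q + aa = 0 := by
        intro t
        rw [← hexp t]
        exact (hHmk _ (hvt t)).mp (hx (Projectivization.mk K _ (hvt t)) (hPhiW (some t)))
      have ha0 : aa = 0 := by
        have h := hgt 0
        rw [zero_pow (by omega : q + 1 ≠ 0), zero_pow hq0.ne'] at h
        linear_combination h
      have hb0 : bb = 0 := by
        by_contra hbne
        have hall2 : ∀ s : K, s + s ^ q + 0 = 0 := by
          intro s
          have h := hgt (bb⁻¹ * s)
          rw [hc0, ha0, mul_pow, inv_pow] at h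
          have hbq : bb ^ q ≠ 0 := pow_ne_zero _ hbne
          have e1 : bb * (bb⁻¹ * s) = s := by rw [← mul_assoc, mul_inv_cancel₀ hbne, one_mul]
          have e2 : bb ^ q * (bb⁻¹ * s) ^ q = s ^ q := by rw [← mul_pow, e1]
          linear_combination h - e1 - e2
        have h1 : Nat.card {s : K // s + s ^ q + 0 = 0} = q :=
          trace_count hq2 hK hfrob 0 (zero_pow hq0.ne')
        have h2 : Nat.card {s : K // s + s ^ q + 0 = 0} = q ^ 2 := by
          rw [Nat.card_congr (Equiv.subtypeUnivEquiv hall2), Nat.card_eq_fintype_card, hK]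
        rw [h1] at h2
        nlinarith
      exact ⟨hc0, hb0, ha0⟩
    · rintro ⟨hc0, hb0, ha0⟩ x hxW
      have hrep : x.rep ∈ W := by
        rwa [Projectivization.submodule_eq, Submodule.span_singleton_le_iff_mem] at hxW
      obtain ⟨s, t, hst⟩ := hdecomp _ hrep
      rw [hst]
      by_cases ht : t = 0
      · subst ht
        rw [zero_smul, add_zero, hH, ← hc, hc0, mul_zero]
      · have htmul : t * (s * t⁻¹) = s := by field_simp
        have hw : s • e + t • f = t • ((s * t⁻¹) • e + f) := by
          rw [smul_add, smul_smul, htmul]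
        rw [hw, hH, hexp, hc0, hb0, ha0]
        simp [zero_pow hq0.ne']
  -- the case analysis
  have hmain : (Nat.card {o : Option K // X o} = q ^ 2 + 1 ∧ (c = 0 ∧ bb = 0 ∧ aa = 0)) ∨
      ((Nat.card {o : Option K // X o} = 1 ∨ Nat.card {o : Option K // X o} = q + 1) ∧
        ¬(c = 0 ∧ bb = 0 ∧ aa = 0)) := by
    by_cases hc0 : c = 0
    · have hcard_opt : Nat.card {o : Option K // X o}
          = Nat.card {t : K // (∑ i, (t • e + f) i ^ (q + 1)) = 0} + 1 := by
        have E : {o : Option K // X o}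
            ≃ Option {t : K // (∑ i, (t • e + f) i ^ (q + 1)) = 0} :=
          optEquiv2 (c = 0) (fun t => (∑ i, (t • e + f) i ^ (q + 1)) = 0) hc0
        rw [Nat.card_congr E, Finite.card_option]
      by_cases hb0 : bb = 0
      · by_cases ha0 : aa = 0
        · left
          refine ⟨?_, hc0, hb0, ha0⟩
          have heqv : {t : K // (∑ i, (t • e + f) i ^ (q + 1)) = 0} ≃ K :=
            Equiv.subtypeUnivEquiv (fun t => by
              rw [hexp t, hc0, hb0, ha0]
              simp [zero_pow hq0.ne'])
          rw [hcard_opt, Nat.card_congr heqv, Nat.card_eq_fintype_card, hK]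
        · right
          refine ⟨Or.inl ?_, fun hz => ha0 hz.2.2⟩
          haveI : IsEmpty {t : K // (∑ i, (t • e + f) i ^ (q + 1)) = 0} := by
            refine ⟨fun t => ha0 ?_⟩
            have h := t.2
            rw [hexp t.1, hc0, hb0] at h
            rw [zero_pow hq0.ne'] at h
            linear_combination h
          rw [hcard_opt, Nat.card_of_isEmpty]
      · right
        refine ⟨Or.inr ?_, fun hz => hb0 hz.2.1⟩
        have heqv : {t : K // (∑ i, (t • e + f) i ^ (q + 1)) = 0}
            ≃ {s : K // s + s ^ q + aa = 0} :=
          Equiv.subtypeEquiv (Equiv.mulLeft₀ bb hb0) (fun t => by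
            rw [hexp t, hc0]
            show _ ↔ bb * t + (bb * t) ^ q + aa = 0
            rw [mul_pow]
            constructor <;> intro h <;> linear_combination h)
        rw [hcard_opt, Nat.card_congr heqv, trace_count hq2 hK hfrob aa haq]
    · have hcard_opt : Nat.card {o : Option K // X o}
          = Nat.card {t : K // (∑ i, (t • e + f) i ^ (q + 1)) = 0} := by
        have E : {o : Option K // X o}
            ≃ {t : K // (∑ i, (t • e + f) i ^ (q + 1)) = 0} :=
          optEquiv1 (c = 0) (fun t => (∑ i, (t • e + f) i ^ (q + 1)) = 0) hc0
        rw [Nat.card_congr E]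
      right
      refine ⟨?_, fun hz => hc0 hz.1⟩
      obtain ⟨β, hβ⟩ : ∃ β : K, β = bb ^ q / c := ⟨_, rfl⟩
      obtain ⟨D, hD⟩ : ∃ D : K, D = β ^ (q + 1) - aa / c := ⟨_, rfl⟩
      have h2 : c * β = bb ^ q := by rw [hβ]; field_simp
      have hβq : β ^ q = bb / c := by rw [hβ, div_pow, hpow2, hcq]
      have h3 : c * β ^ q = bb := by rw [hβq]; field_simp
      have h4 : c * (aa / c) = aa := by field_simp
      have key : ∀ t : K, c * t ^ (q + 1) + bb * t + bb ^ q * t ^ q + aa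
          = c * ((t + β) ^ (q + 1) - D) := by
        intro t
        have h1 : (t + β) ^ (q + 1) = t ^ (q + 1) + β * t ^ q + β ^ q * t + β ^ (q + 1) := by
          rw [pow_succ (t + β), hfrob]; ring
        rw [h1, hD]
        linear_combination (-(t ^ q : K)) * h2 - t * h3 - h4
      have hiff : ∀ t : K, ((∑ i, (t • e + f) i ^ (q + 1)) = 0 ↔ (t + β) ^ (q + 1) = D) := by
        intro t
        rw [hexp t, key t, mul_eq_zero, sub_eq_zero]
        simp [hc0]
      have heqv : {t : K // (∑ i, (t • e + f) i ^ (q + 1)) = 0}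
          ≃ {s : K // s ^ (q + 1) = D} :=
        Equiv.subtypeEquiv (Equiv.addRight β) (fun t => by
          rw [Equiv.coe_addRight]
          exact hiff t)
      rw [hcard_opt, Nat.card_congr heqv]
      by_cases hD0 : D = 0
      · left
        haveI : Unique {s : K // s ^ (q + 1) = D} :=
          { default := ⟨0, (zero_pow (by omega : q + 1 ≠ 0)).trans hD0.symm⟩,
            uniq := fun s => Subtype.ext
              ((pow_eq_zero_iff (by omega : q + 1 ≠ 0)).mp (s.2.trans hD0)) }
        exact Nat.card_unique
      · right
        have hDq : D ^ q = D := by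
          have h5 : (aa / c) ^ q = aa / c := by rw [div_pow, haq, hcq]
          rw [hD, ← hF, map_sub, hF, hF, hfixpow, h5]
        exact norm_count hq2 hK D hD0 hDq
  -- assemble
  rw [hNcard]
  have hq4 : 4 ≤ q ^ 2 := by nlinarith
  have hqq : q < q ^ 2 := by nlinarith
  constructor
  · rcases hmain with ⟨h1, _⟩ | ⟨h1 | h1, _⟩ <;> rw [h1] <;> simp [Set.mem_insert_iff]
  · constructor
    · intro hNq
      rcases hmain with ⟨_, hz⟩ | ⟨h1 | h1, _⟩
      · exact hall.mpr hz
      · omega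
      · omega
    · intro hx
      have hz := hall.mp hx
      rcases hmain with ⟨h1, _⟩ | ⟨_, hz'⟩
      · exact h1
      · exact absurd hz hz'
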